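/- If T = 2I or T = −2I (where I is the n×n identity matrix), then for every finite digit set D ⊂ ℤⁿ the attractor F(T,D) is connected. -/

import Mathlib

/-- If `T = 2I` or `T = -2I` (so that `T⁻¹(x + d) = ε⁻¹ • (x + d)` with
`ε = 2` or `ε = -2`), then for every finite digit set `D ⊂ ℤⁿ` the attractor `F(T,D)`
(the unique nonempty compact set with `F = ⋃_{d ∈ D} T⁻¹(F + d)`) is connected. -/
theorem stmt2 (n : ℕ) (ε : ℝ) (hε : ε = 2 ∨ ε = -2)
    (D : Finset (Fin n → ℤ)) (hD : D.Nonempty)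
    (F : Set (Fin n → ℝ)) (hne : F.Nonempty) (hcpt : IsCompact F)
    (hfix : F = ⋃ d ∈ D, (fun x => ε⁻¹ • (x + fun i => ((d i : ℝ)))) '' F) :
    IsConnected F := by
  classical
  obtain ⟨q, hq⟩ := hne
  obtain ⟨d₀, hd₀⟩ := hD
  set c : (Fin n → ℤ) → (Fin n → ℝ) := fun d i => (d i : ℝ) with hc
  set f : (Fin n → ℤ) → (Fin n → ℝ) → (Fin n → ℝ) := fun d x => ε⁻¹ • (x + c d) with hf
  have hεne : ε ≠ 0 := by rcases hε with h | h <;> norm_num [h]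
  have hε1 : ε - 1 ≠ 0 := by rcases hε with h | h <;> norm_num [h]
  have hinv : |ε⁻¹| = 2⁻¹ := by rcases hε with h | h <;> norm_num [h, abs_inv]
  have himg : ∀ d ∈ D, ∀ x ∈ F, f d x ∈ F := by
    intro d hd x hx
    rw [hfix]
    exact Set.mem_biUnion hd ⟨x, hx, rfl⟩
  have hcov : ∀ x ∈ F, ∃ d ∈ D, ∃ w ∈ F, x = f d w := by
    intro x hx
    rw [hfix] at hx
    simp only [Set.mem_iUnion, Set.mem_image] at hx
    obtain ⟨d, hd, w, hw, hwe⟩ := hx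
    exact ⟨d, hd, w, hw, hwe.symm⟩
  have hlip : ∀ d x y, ‖f d x - f d y‖ = 2⁻¹ * ‖x - y‖ := by
    intro d x y
    have h1 : f d x - f d y = ε⁻¹ • (x - y) := by
      simp only [hf]; module
    rw [h1, norm_smul, Real.norm_eq_abs, hinv]
  set p : (Fin n → ℤ) → (Fin n → ℝ) := fun d => (ε - 1)⁻¹ • c d with hp
  have hfp : ∀ (d : Fin n → ℤ) (t s' : ℝ) (u : Fin n → ℝ) (e : Fin n → ℤ),
      c e = c d + t • u → f e (p d + s' • u) = p d + (ε⁻¹ * (s' + t)) • u := by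
    intro d t s' u e he
    show ε⁻¹ • (p d + s' • u + c e) = _
    rw [he, hp]
    match_scalars <;> field_simp <;> ring
  have hfixp : ∀ d : Fin n → ℤ, f d (p d) = p d := by
    intro d
    have := hfp d 0 0 0 d (by simp)
    simpa using this
  set a : ℝ := if ε = 2 then 0 else -(2/3) with ha
  have hstep : ∀ s ∈ Set.Icc a (a + 1),
      ε * s - (if ε * s ≤ a + 1 then (0:ℝ) else 1) ∈ Set.Icc a (a + 1) := by
    intro s hs
    rcases hε with h | h <;>
      (subst h; simp only [ha] at hs ⊢) <;> norm_num at hs ⊢ <;>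
      [skip; skip] <;> split_ifs with h2 <;> constructor <;> linarith [hs.1, hs.2]
  have habs1 : ∀ s ∈ Set.Icc a (a + 1), |s| ≤ 1 := by
    intro s hs
    rcases hε with h | h <;> (subst h; simp only [ha] at hs) <;> norm_num at hs <;>
      rw [abs_le] <;> constructor <;> linarith [hs.1, hs.2]
  -- key approximation lemma for segments
  have key : ∀ (d d' : Fin n → ℤ), d ∈ D → d' ∈ D → ∀ N : ℕ, ∀ s ∈ Set.Icc a (a + 1),
      ∃ y ∈ F, ‖(p d + s • (c d' - c d)) - y‖ ≤
        2⁻¹ ^ N * (‖p d‖ + ‖c d' - c d‖ + ‖q‖) := by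
    intro d d' hd hd' N
    induction N with
    | zero =>
      intro s hs
      refine ⟨q, hq, ?_⟩
      have h1 : ‖p d + s • (c d' - c d) - q‖ ≤ ‖p d‖ + ‖s • (c d' - c d)‖ + ‖q‖ := by
        calc ‖p d + s • (c d' - c d) - q‖ ≤ ‖p d + s • (c d' - c d)‖ + ‖q‖ := norm_sub_le _ _
        _ ≤ ‖p d‖ + ‖s • (c d' - c d)‖ + ‖q‖ := by
            have := norm_add_le (p d) (s • (c d' - c d)); linarith
      have h2 : ‖s • (c d' - c d)‖ ≤ ‖c d' - c d‖ := by
        rw [norm_smul, Real.norm_eq_abs]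
        calc |s| * ‖c d' - c d‖ ≤ 1 * ‖c d' - c d‖ :=
          mul_le_mul_of_nonneg_right (habs1 s hs) (norm_nonneg _)
        _ = ‖c d' - c d‖ := one_mul _
      simp only [pow_zero, one_mul]
      linarith
    | succ N ih =>
      intro s hs
      set t : ℝ := if ε * s ≤ a + 1 then (0:ℝ) else 1 with ht
      have hs' : ε * s - t ∈ Set.Icc a (a + 1) := hstep s hs
      obtain ⟨y, hy, hny⟩ := ih (ε * s - t) hs'
      set e : Fin n → ℤ := if ε * s ≤ a + 1 then d else d' with he
      have heD : e ∈ D := by rw [he]; split_ifs <;> assumption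
      have hce : c e = c d + t • (c d' - c d) := by
        rw [he, ht]; split_ifs with h2
        · simp
        · simp only [one_smul]; abel
      have hid : p d + s • (c d' - c d) = f e (p d + (ε * s - t) • (c d' - c d)) := by
        rw [hfp d t (ε * s - t) (c d' - c d) e hce]
        have h3 : ε⁻¹ * ((ε * s - t) + t) = s := by field_simp; ring
        rw [h3]
      refine ⟨f e y, himg e heD y hy, ?_⟩
      rw [hid, hlip]
      calc 2⁻¹ * ‖p d + (ε * s - t) • (c d' - c d) - y‖
          ≤ 2⁻¹ * (2⁻¹ ^ N * (‖p d‖ + ‖c d' - c d‖ + ‖q‖)) := by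
            apply mul_le_mul_of_nonneg_left hny; norm_num
        _ = 2⁻¹ ^ (N + 1) * (‖p d‖ + ‖c d' - c d‖ + ‖q‖) := by ring
  have hIcc1 : ∀ τ : ℝ, τ ∈ Set.Icc (0:ℝ) 1 → τ * (ε - 1)⁻¹ ∈ Set.Icc a (a + 1) := by
    intro τ hτ
    rcases hε with h | h <;> (subst h; simp only [ha]) <;> norm_num <;>
      constructor <;> nlinarith [hτ.1, hτ.2]
  have hclF : IsClosed F := hcpt.isClosed
  have hseg : ∀ d ∈ D, ∀ d' ∈ D, segment ℝ (p d) (p d') ⊆ F := by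
    intro d hd d' hd' x hx
    rw [segment_eq_image'] at hx
    obtain ⟨τ, hτ, rfl⟩ := hx
    show p d + τ • (p d' - p d) ∈ F
    have hx' : p d + τ • (p d' - p d) = p d + (τ * (ε - 1)⁻¹) • (c d' - c d) := by
      have h4 : p d' - p d = (ε - 1)⁻¹ • (c d' - c d) := by rw [hp]; module
      rw [h4, smul_smul]
    rw [hx', ← hclF.closure_eq, Metric.mem_closure_iff]
    intro δ hδ
    set C : ℝ := ‖p d‖ + ‖c d' - c d‖ + ‖q‖ with hC
    have hC0 : 0 ≤ C := by positivity
    obtain ⟨N, hN⟩ := exists_pow_lt_of_lt_one (show (0:ℝ) < δ / (C + 1) by positivity)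
      (show (2:ℝ)⁻¹ < 1 by norm_num)
    obtain ⟨y, hy, hny⟩ := key d d' hd hd' N _ (hIcc1 τ hτ)
    refine ⟨y, hy, ?_⟩
    rw [dist_eq_norm]
    have h5 : (2:ℝ)⁻¹ ^ N * C < δ := by
      have h6 : (2:ℝ)⁻¹ ^ N * (C + 1) < (δ / (C + 1)) * (C + 1) := by
        apply mul_lt_mul_of_pos_right hN; positivity
      have h7 : (δ / (C + 1)) * (C + 1) = δ := by field_simp
      nlinarith [pow_pos (show (0:ℝ) < 2⁻¹ by norm_num) N]
    exact lt_of_le_of_lt hny h5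
  -- the star
  set S : Set (Fin n → ℝ) := ⋃ d ∈ D, segment ℝ (p d₀) (p d) with hS
  have hpS : ∀ d ∈ D, p d ∈ S :=
    fun d hd => Set.mem_biUnion hd (right_mem_segment ℝ _ _)
  have hp0S : p d₀ ∈ S := hpS d₀ hd₀
  have hSsub : S ⊆ F := by
    intro x hx
    obtain ⟨d, hd, hxd⟩ := Set.mem_iUnion₂.mp hx
    exact hseg d₀ hd₀ d hd hxd
  have hScon : IsPreconnected S := by
    have hSeq : S = ⋃₀ ((fun d => segment ℝ (p d₀) (p d)) '' ↑D) := by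
      rw [Set.sUnion_image]; ext x; simp [hS]
    rw [hSeq]
    apply isPreconnected_sUnion (p d₀)
    · rintro s ⟨d, hd, rfl⟩; exact left_mem_segment ℝ _ _
    · rintro s ⟨d, hd, rfl⟩; exact (convex_segment _ _).isPreconnected
  have hcont : ∀ d : Fin n → ℤ, Continuous (f d) :=
    fun d => by show Continuous (fun x => ε⁻¹ • (x + c d)); fun_prop
  -- iterated sets
  set Tt : ℕ → Set (Fin n → ℝ) :=
    fun k => Nat.rec S (fun _ Tk => S ∪ ⋃ d ∈ D, f d '' Tk) k with hTt
  have hT0 : Tt 0 = S := rfl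
  have hTs : ∀ k, Tt (k + 1) = S ∪ ⋃ d ∈ D, f d '' (Tt k) := fun k => rfl
  have hTS : ∀ k, S ⊆ Tt k := by
    intro k
    cases k with
    | zero => exact subset_rfl
    | succ k => rw [hTs]; exact Set.subset_union_left
  have hTF : ∀ k, Tt k ⊆ F := by
    intro k
    induction k with
    | zero => exact hSsub
    | succ k ih =>
      rw [hTs]
      apply Set.union_subset hSsub
      apply Set.iUnion₂_subset
      intro d hd
      rintro _ ⟨x, hx, rfl⟩
      exact himg d hd x (ih hx)
  have hTcon : ∀ k, IsPreconnected (Tt k) := by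
    intro k
    induction k with
    | zero => exact hScon
    | succ k ih =>
      rw [hTs]
      have heq : S ∪ ⋃ d ∈ D, f d '' Tt k
          = ⋃₀ ((fun d => S ∪ f d '' Tt k) '' ↑D) := by
        rw [Set.sUnion_image]
        ext x
        simp only [Set.mem_union, Set.mem_iUnion]
        constructor
        · rintro (hx | ⟨d, hd, hx⟩)
          · exact ⟨d₀, hd₀, Or.inl hx⟩
          · exact ⟨d, hd, Or.inr hx⟩
        · rintro ⟨d, hd, hx | hx⟩
          · exact Or.inl hx
          · exact Or.inr ⟨d, hd, hx⟩
      rw [heq]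
      apply isPreconnected_sUnion (p d₀)
      · rintro s ⟨d, hd, rfl⟩; exact Or.inl hp0S
      · rintro s ⟨d, hd, rfl⟩
        apply IsPreconnected.union (p d)
        · exact hpS d hd
        · exact ⟨p d, hTS k (hpS d hd), hfixp d⟩
        · exact hScon
        · exact ih.image (f d) (hcont d).continuousOn
  set U : Set (Fin n → ℝ) := ⋃ k, Tt k with hU
  have hUcon : IsPreconnected U := by
    have : U = ⋃₀ Set.range Tt := by rw [Set.sUnion_range]
    rw [this]
    apply isPreconnected_sUnion (p d₀)
    · rintro s ⟨k, rfl⟩; exact hTS k hp0S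
    · rintro s ⟨k, rfl⟩; exact hTcon k
  obtain ⟨R, hR⟩ := isBounded_iff_forall_norm_le.mp hcpt.isBounded
  have hR0 : (0:ℝ) ≤ R := le_trans (norm_nonneg q) (hR q hq)
  have happrox : ∀ N : ℕ, ∀ x ∈ F, ∃ y ∈ Tt N, ‖x - y‖ ≤ 2⁻¹ ^ N * (R + ‖p d₀‖) := by
    intro N
    induction N with
    | zero =>
      intro x hx
      refine ⟨p d₀, hp0S, ?_⟩
      simp only [pow_zero, one_mul]
      calc ‖x - p d₀‖ ≤ ‖x‖ + ‖p d₀‖ := norm_sub_le _ _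
        _ ≤ R + ‖p d₀‖ := by linarith [hR x hx]
    | succ N ih =>
      intro x hx
      obtain ⟨d, hd, w, hw, rfl⟩ := hcov x hx
      obtain ⟨y, hy, hny⟩ := ih w hw
      refine ⟨f d y, ?_, ?_⟩
      · rw [hTs]; exact Or.inr (Set.mem_biUnion hd ⟨y, hy, rfl⟩)
      · rw [hlip]
        calc 2⁻¹ * ‖w - y‖ ≤ 2⁻¹ * (2⁻¹ ^ N * (R + ‖p d₀‖)) := by
              apply mul_le_mul_of_nonneg_left hny; norm_num
          _ = 2⁻¹ ^ (N + 1) * (R + ‖p d₀‖) := by ring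
  have hFU : F ⊆ closure U := by
    intro x hx
    rw [Metric.mem_closure_iff]
    intro δ hδ
    set C : ℝ := R + ‖p d₀‖ with hCdef
    have hC0 : 0 ≤ C := add_nonneg hR0 (norm_nonneg _)
    obtain ⟨N, hN⟩ := exists_pow_lt_of_lt_one (show (0:ℝ) < δ / (C + 1) by positivity)
      (show (2:ℝ)⁻¹ < 1 by norm_num)
    obtain ⟨y, hy, hny⟩ := happrox N x hx
    refine ⟨y, Set.mem_iUnion.mpr ⟨N, hy⟩, ?_⟩
    rw [dist_eq_norm]
    have h5 : (2:ℝ)⁻¹ ^ N * C < δ := by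
      have h6 : (2:ℝ)⁻¹ ^ N * (C + 1) < (δ / (C + 1)) * (C + 1) := by
        apply mul_lt_mul_of_pos_right hN; positivity
      have h7 : (δ / (C + 1)) * (C + 1) = δ := by field_simp
      nlinarith [pow_pos (show (0:ℝ) < 2⁻¹ by norm_num) N]
    exact lt_of_le_of_lt hny h5
  have hUF : closure U ⊆ F := closure_minimal (Set.iUnion_subset hTF) hclF
  have hFeq : F = closure U := Set.Subset.antisymm hFU hUF
  exact ⟨⟨q, hq⟩, hFeq ▸ hUcon.closure⟩
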